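/- Let p, q be Gaussian integers with p and q coprime in ℤ[i] and |p| = |q| > 1, and let r = p/q. Let P₁, P₂ be integer polynomials such that every nonzero term of P₁ has degree at most d₁ and every nonzero term of P₂ has degree at least d₂, with d₂ > d₁. If P₁(r) + P₂(r) = 0 and P₁(r) ≠ 0, then the sum of the absolute values of the coefficients of P₁ is at least |p|^(d₂ − d₁). -/

import Mathlib

open Polynomial

lemma one_le_abs_toComplex {z : GaussianInt} (hz : z ≠ 0) :
    1 ≤ ‖GaussianInt.toComplex z‖ := by
  have h1 : (1 : ℤ) ≤ z.norm := Int.add_one_le_of_lt (GaussianInt.norm_pos.2 hz)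
  have h2 : (z.norm : ℝ) = Complex.normSq (GaussianInt.toComplex z) :=
    GaussianInt.intCast_real_norm z
  have h3 : (1 : ℝ) ≤ ‖GaussianInt.toComplex z‖ ^ 2 := by
    rw [Complex.sq_norm, ← h2]
    exact_mod_cast h1
  nlinarith [norm_nonneg (GaussianInt.toComplex z)]

/-- If `r = p/q` with `p, q` coprime Gaussian integers of equal absolute value
`> 1`, `P₁` has all terms of degree `≤ d₁`, `P₂` has all terms of degree
`≥ d₂ > d₁`, `P₁(r) + P₂(r) = 0` and `P₁(r) ≠ 0`, then the sum of the absolute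
values of the coefficients of `P₁` is at least `|p|^(d₂ − d₁)`. -/
theorem stmt_11 (p q : GaussianInt) (hpq : IsCoprime p q)
    (habs : ‖GaussianInt.toComplex p‖ =
      ‖GaussianInt.toComplex q‖)
    (hgt : 1 < ‖GaussianInt.toComplex p‖)
    (P₁ P₂ : Polynomial ℤ) (d₁ d₂ : ℕ) (hd : d₁ < d₂)
    (hP₁ : ∀ k, P₁.coeff k ≠ 0 → k ≤ d₁)
    (hP₂ : ∀ k, P₂.coeff k ≠ 0 → d₂ ≤ k)
    (r : ℂ) (hr : r = GaussianInt.toComplex p / GaussianInt.toComplex q)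
    (hsum : Polynomial.aeval r P₁ + Polynomial.aeval r P₂ = 0)
    (hne : Polynomial.aeval r P₁ ≠ 0) :
    ‖GaussianInt.toComplex p‖ ^ (d₂ - d₁) ≤
      ∑ k ∈ Finset.range (P₁.natDegree + 1), |(P₁.coeff k : ℝ)| := by
  set pc := GaussianInt.toComplex p with hpc
  set qc := GaussianInt.toComplex q with hqc
  have hq0 : q ≠ 0 := by
    intro h
    have hz : qc = 0 := by rw [hqc, h, map_zero]
    rw [hz, norm_zero] at habs
    linarith
  have hqc0 : qc ≠ 0 := fun h => hq0 (GaussianInt.toComplex_eq_zero.mp h)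
  have habsr : ‖r‖ = 1 := by
    rw [hr, norm_div, ← habs, div_self (ne_of_gt (lt_trans one_pos hgt))]
  -- N covers everything
  set N := max (max d₁ P₁.natDegree) P₂.natDegree with hN
  have hNd₁ : d₁ ≤ N := le_trans (le_max_left _ _) (le_max_left _ _)
  have hN₁ : P₁.natDegree ≤ N := le_trans (le_max_right _ _) (le_max_left _ _)
  have hN₂ : P₂.natDegree ≤ N := le_max_right _ _
  -- A := q^{d₁} P₁(r) as a Gaussian integer
  set A : GaussianInt := ∑ k ∈ Finset.range (N + 1),
      (P₁.coeff k : GaussianInt) * p ^ k * q ^ (d₁ - k) with hA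
  set B : GaussianInt := ∑ k ∈ Finset.range (N + 1),
      (P₂.coeff k : GaussianInt) * p ^ k * q ^ (N - k) with hB
  have castA : GaussianInt.toComplex A = qc ^ d₁ * Polynomial.aeval r P₁ := by
    rw [hA, map_sum, Polynomial.aeval_eq_sum_range' (Nat.lt_succ_of_le hN₁),
      Finset.mul_sum]
    refine Finset.sum_congr rfl fun k hk => ?_
    by_cases hco : P₁.coeff k = 0
    · simp [hco]
    · have hkd : k ≤ d₁ := hP₁ k hco
      push_cast
      rw [hr]
      have : qc ^ d₁ = qc ^ k * qc ^ (d₁ - k) := by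
        rw [← pow_add, Nat.add_sub_cancel' hkd]
      rw [this]
      simp only [map_mul, map_pow, map_intCast]
      rw [← hpc, ← hqc, div_pow, div_eq_mul_inv]
      have hinv := mul_inv_cancel₀ (pow_ne_zero k hqc0)
      linear_combination (-((P₁.coeff k : ℂ) * qc ^ (d₁ - k) * pc ^ k)) * hinv
  have castB : GaussianInt.toComplex B = qc ^ N * Polynomial.aeval r P₂ := by
    rw [hB, map_sum, Polynomial.aeval_eq_sum_range' (Nat.lt_succ_of_le hN₂),
      Finset.mul_sum]
    refine Finset.sum_congr rfl fun k hk => ?_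
    by_cases hco : P₂.coeff k = 0
    · simp [hco]
    · have hkd : k ≤ N := Nat.le_of_lt_succ (Finset.mem_range.mp hk)
      push_cast
      rw [hr]
      have : qc ^ N = qc ^ k * qc ^ (N - k) := by
        rw [← pow_add, Nat.add_sub_cancel' hkd]
      rw [this]
      simp only [map_mul, map_pow, map_intCast]
      rw [← hpc, ← hqc, div_pow, div_eq_mul_inv]
      have hinv := mul_inv_cancel₀ (pow_ne_zero k hqc0)
      linear_combination (-((P₂.coeff k : ℂ) * qc ^ (N - k) * pc ^ k)) * hinv
  -- p^{d₂} divides B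
  have hdvdB : p ^ d₂ ∣ B := by
    refine Finset.dvd_sum fun k hk => ?_
    by_cases hco : P₂.coeff k = 0
    · simp [hco]
    · have hkd : d₂ ≤ k := hP₂ k hco
      exact Dvd.dvd.mul_right (Dvd.dvd.mul_left (pow_dvd_pow p hkd) _) _
  -- key relation: A * q^N = -(B * q^{d₁})
  have hrel : A * q ^ N = -(B * q ^ d₁) := by
    apply GaussianInt.toComplex_inj.mp
    rw [map_mul, map_neg, map_mul, map_pow, map_pow, castA, castB]
    have := hsum
    have h2 : Polynomial.aeval r P₂ = -Polynomial.aeval r P₁ := by linear_combination hsum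
    rw [h2]
    ring
  have hdvdA : p ^ d₂ ∣ A := by
    have hcop : IsCoprime (p ^ d₂) (q ^ N) := (hpq.pow : _)
    refine hcop.dvd_of_dvd_mul_right ?_
    rw [hrel]
    exact (hdvdB.mul_right _).neg_right
  have hA0 : A ≠ 0 := by
    intro h
    apply hne
    have := castA
    rw [h, map_zero] at this
    rcases mul_eq_zero.mp this.symm with h' | h'
    · exact absurd h' (pow_ne_zero _ hqc0)
    · exact h'
  -- from divisibility: |A| ≥ |p|^{d₂}
  obtain ⟨C, hC⟩ := hdvdA
  have hC0 : C ≠ 0 := by rintro rfl; simp at hC; exact hA0 hC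
  have habsA : ‖pc‖ ^ d₂ ≤ ‖GaussianInt.toComplex A‖ := by
    rw [hC, map_mul, map_pow, norm_mul, norm_pow, ← hpc]
    have := one_le_abs_toComplex hC0
    have h0 : (0:ℝ) ≤ ‖pc‖ ^ d₂ := by positivity
    nlinarith
  -- |A| = |q|^{d₁} |P₁(r)|
  have habsA' : ‖GaussianInt.toComplex A‖
      = ‖pc‖ ^ d₁ * ‖Polynomial.aeval r P₁‖ := by
    rw [castA, norm_mul, norm_pow, habs]
  -- conclude |P₁(r)| ≥ |p|^{d₂-d₁}
  have hp0 : (0:ℝ) < ‖pc‖ := lt_trans one_pos hgt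
  have hstep : ‖pc‖ ^ (d₂ - d₁) ≤ ‖Polynomial.aeval r P₁‖ := by
    have hpow : ‖pc‖ ^ d₂ = ‖pc‖ ^ d₁ * ‖pc‖ ^ (d₂ - d₁) := by
      rw [← pow_add, Nat.add_sub_cancel' hd.le]
    rw [habsA', hpow] at habsA
    have := le_of_mul_le_mul_left habsA (by positivity : (0:ℝ) < ‖pc‖ ^ d₁)
    exact this
  -- triangle inequality
  refine le_trans hstep ?_
  rw [Polynomial.aeval_eq_sum_range]
  refine le_trans (norm_sum_le _ _) ?_
  refine Finset.sum_le_sum fun k hk => ?_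
  rw [zsmul_eq_mul, norm_mul, norm_pow, habsr, one_pow, mul_one]
  simp
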